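/- arXiv:1107.5914 — 3 statements merged into one kernel-verified Lean document; each statement's English description precedes it below -/
import Mathlib

section
/- Along solutions of the chemostat system, the quantity z2 = s2 + x2 - x1 satisfies z2(t) = s2in + (z2(0) - s2in)e^{-Dt}; consequently s2(t) + x2(t) - x1(t) → s2in as t → ∞, and all components of the solution are bounded on [0,∞). -/
open Filter Real Set

/-- Exponential decay solution: if z' = D(c - z) on [0,∞), then
z t = c + (z 0 - c) exp(-D t). -/
lemma exp_decay_sol (D c : ℝ) (z : ℝ → ℝ)
    (hz : ∀ t : ℝ, 0 ≤ t → HasDerivAt z (D * (c - z t)) t) :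
    ∀ t : ℝ, 0 ≤ t → z t = c + (z 0 - c) * Real.exp (-D * t) := by
  intro t ht
  set g : ℝ → ℝ := fun u => (z u - c) * Real.exp (D * u) with hg
  have hgd : ∀ u : ℝ, 0 ≤ u → HasDerivAt g 0 u := by
    intro u hu
    have he : HasDerivAt (fun u : ℝ => Real.exp (D * u)) (Real.exp (D * u) * D) u := by
      simpa using ((hasDerivAt_id u).const_mul D).exp
    have := ((hz u hu).sub_const c).mul he
    exact this.congr_deriv (by ring)
  have hcont : ContinuousOn g (Icc 0 t) := fun u hu =>
    ((hgd u hu.1).continuousAt).continuousWithinAt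
  have hconst := constant_of_has_deriv_right_zero hcont
    (fun u hu => ((hgd u hu.1).hasDerivWithinAt))
  have h1 : g t = g 0 := hconst t ⟨ht, le_rfl⟩
  have h2 : (z t - c) * Real.exp (D * t) = z 0 - c := by
    simpa [hg] using h1
  have hne : Real.exp (D * t) ≠ 0 := (Real.exp_pos _).ne'
  have : z t - c = (z 0 - c) * Real.exp (-(D * t)) := by
    rw [Real.exp_neg]
    field_simp
    linarith [h2]
  have := this
  rw [neg_mul] at *
  linarith [this]

/-- Sign preservation for x' = a x with x 0 ≥ 0. -/
lemma nonneg_of_linear (a x : ℝ → ℝ)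
    (hx : ∀ t : ℝ, 0 ≤ t → HasDerivAt x (a t * x t) t)
    (hcont : ContinuousOn a (Ici 0)) (h0 : 0 ≤ x 0) :
    ∀ t : ℝ, 0 ≤ t → 0 ≤ x t := by
  by_contra h
  push_neg at h
  obtain ⟨t1, ht1, hneg⟩ := h
  have hxcont : ContinuousOn x (Icc 0 t1) := fun u hu =>
    ((hx u hu.1).continuousAt).continuousWithinAt
  have hivt : (0 : ℝ) ∈ x '' Icc 0 t1 := by
    apply intermediate_value_Icc' ht1 hxcont
    exact ⟨hneg.le, h0⟩
  obtain ⟨T, hT, hxT⟩ := hivt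
  obtain ⟨K, hK⟩ := (isCompact_Icc : IsCompact (Icc T t1)).exists_bound_of_continuousOn
    (hcont.mono (fun u hu => le_trans hT.1 hu.1))
  have hTt1 : T ≤ t1 := hT.2
  have hb := norm_le_gronwallBound_of_norm_deriv_right_le (δ := 0) (ε := 0) (K := K)
    (f := x) (f' := fun u => a u * x u) (a := T) (b := t1)
    (hxcont.mono (fun u hu => ⟨le_trans hT.1 hu.1, hu.2⟩))
    (fun u hu => (hx u (le_trans hT.1 hu.1)).hasDerivWithinAt)
    (by simp [hxT])
    (fun u hu => by
      have := hK u ⟨hu.1, hu.2.le⟩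
      have h1 : ‖a u * x u‖ = ‖a u‖ * ‖x u‖ := norm_mul _ _
      have h2 : ‖a u‖ * ‖x u‖ ≤ K * ‖x u‖ :=
        mul_le_mul_of_nonneg_right this (norm_nonneg _)
      simpa [h1] using h2)
  have := hb t1 ⟨hTt1, le_rfl⟩
  rw [gronwallBound_ε0_δ0] at this
  have : x t1 = 0 := by
    have := norm_le_zero_iff.mp this
    exact this
  linarith

/-- First-crossing argument: if w 0 ≥ 0 and w' > 0 whenever w = 0, then w ≥ 0. -/
lemma nonneg_of_crossing (w w' : ℝ → ℝ)
    (hw : ∀ t : ℝ, 0 ≤ t → HasDerivAt w (w' t) t)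
    (h0 : 0 ≤ w 0)
    (hpos : ∀ T : ℝ, 0 ≤ T → w T = 0 → 0 < w' T) :
    ∀ t : ℝ, 0 ≤ t → 0 ≤ w t := by
  by_contra h
  push_neg at h
  obtain ⟨t0, ht0, hneg⟩ := h
  have hwcont : ContinuousOn w (Icc 0 t0) := fun u hu =>
    ((hw u hu.1).continuousAt).continuousWithinAt
  set S : Set ℝ := Icc 0 t0 ∩ w ⁻¹' Ici 0 with hS
  have hSclosed : IsClosed S :=
    hwcont.preimage_isClosed_of_isClosed isClosed_Icc isClosed_Ici
  have hSne : S.Nonempty := ⟨0, ⟨le_rfl, ht0⟩, h0⟩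
  have hSbdd : BddAbove S := ⟨t0, fun u hu => hu.1.2⟩
  set T := sSup S with hT
  have hTS : T ∈ S := hSclosed.csSup_mem hSne hSbdd
  have hT0 : 0 ≤ T := hTS.1.1
  have hTt0 : T ≤ t0 := hTS.1.2
  have hwT0 : 0 ≤ w T := hTS.2
  have hTne : T ≠ t0 := by
    intro he; rw [he] at hwT0; linarith
  have hTlt : T < t0 := lt_of_le_of_ne hTt0 hTne
  have hafter : ∀ u ∈ Ioc T t0, w u < 0 := by
    intro u hu
    by_contra hge
    push_neg at hge
    have : u ∈ S := ⟨⟨le_trans hT0 hu.1.le, hu.2⟩, hge⟩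
    exact absurd (le_csSup hSbdd this) (not_le.mpr hu.1)
  -- w T ≤ 0 by right limit
  have hIoc : Ioc T t0 ∈ nhdsWithin T (Ioi T) :=
    Ioc_mem_nhdsGT_of_mem ⟨le_rfl, hTlt⟩
  have hwTle : w T ≤ 0 := by
    have htd : Tendsto w (nhdsWithin T (Ioi T)) (nhds (w T)) :=
      ((hw T hT0).continuousAt).continuousWithinAt.tendsto
    refine le_of_tendsto htd ?_
    filter_upwards [hIoc] with u hu
    exact (hafter u hu).le
  have hwT : w T = 0 := le_antisymm hwTle hwT0
  have hd : 0 < w' T := hpos T hT0 hwT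
  have hslope : Tendsto (slope w T) (nhdsWithin T {T}ᶜ) (nhds (w' T)) :=
    hasDerivAt_iff_tendsto_slope.mp (hw T hT0)
  have hslope' : Tendsto (slope w T) (nhdsWithin T (Ioi T)) (nhds (w' T)) :=
    hslope.mono_left (nhdsWithin_mono T (fun u hu => ne_of_gt hu))
  have hev : ∀ᶠ u in nhdsWithin T (Ioi T), 0 < slope w T u :=
    hslope'.eventually (eventually_gt_nhds hd)
  have hne : (nhdsWithin T (Ioi T)).NeBot := by
    exact nhdsGT_neBot T
  obtain ⟨u, hu1, hu2⟩ := (hev.and hIoc).exists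
  have hTu : T < u := hu2.1
  rw [slope_def_field] at hu1
  have hden : 0 < u - T := sub_pos.mpr hTu
  have hnum : 0 < w u - w T := by
    rcases div_pos_iff.mp hu1 with ⟨h1, _⟩ | ⟨_, h2⟩
    · exact h1
    · linarith
  have : 0 < w u := by rw [hwT] at hnum; linarith
  exact absurd this (not_lt.mpr (hafter u hu2).le)

/-- z2 = s2 + x2 - x1 satisfies z2(t) = s2in + (z2(0) - s2in)e^{-Dt},
hence s2 + x2 - x1 → s2in, and all components are bounded on [0,∞). -/
theorem stmt_2
    (D s1in s2in : ℝ) (hD : 0 < D) (hs1in : 0 < s1in) (hs2in : 0 < s2in)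
    (f1 f2 : ℝ → ℝ → ℝ)
    (hf1C1 : ContDiff ℝ 1 (fun p : ℝ × ℝ => f1 p.1 p.2))
    (hf2C1 : ContDiff ℝ 1 (fun p : ℝ × ℝ => f2 p.1 p.2))
    (hf1nonneg : ∀ u v : ℝ, 0 ≤ f1 u v)
    (hf2nonneg : ∀ u v : ℝ, 0 ≤ f2 u v)
    (hf10 : ∀ v : ℝ, f1 0 v = 0)
    (hf20 : ∀ u : ℝ, f2 u 0 = 0)
    (s1 x1 s2 x2 : ℝ → ℝ)
    (hinit : 0 ≤ s1 0 ∧ 0 ≤ x1 0 ∧ 0 ≤ s2 0 ∧ 0 ≤ x2 0)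
    (hode1 : ∀ t : ℝ, 0 ≤ t →
      HasDerivAt s1 (D * (s1in - s1 t) - f1 (s1 t) (s2 t) * x1 t) t)
    (hode2 : ∀ t : ℝ, 0 ≤ t →
      HasDerivAt x1 ((f1 (s1 t) (s2 t) - D) * x1 t) t)
    (hode3 : ∀ t : ℝ, 0 ≤ t →
      HasDerivAt s2 (D * (s2in - s2 t) - f2 (s1 t) (s2 t) * x2 t
        + f1 (s1 t) (s2 t) * x1 t) t)
    (hode4 : ∀ t : ℝ, 0 ≤ t →
      HasDerivAt x2 ((f2 (s1 t) (s2 t) - D) * x2 t) t) :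
    (∀ t : ℝ, 0 ≤ t →
      s2 t + x2 t - x1 t = s2in + (s2 0 + x2 0 - x1 0 - s2in) * Real.exp (-D * t)) ∧
    Tendsto (fun t => s2 t + x2 t - x1 t) atTop (nhds s2in) ∧
    (∃ B : ℝ, ∀ t : ℝ, 0 ≤ t →
      |s1 t| ≤ B ∧ |x1 t| ≤ B ∧ |s2 t| ≤ B ∧ |x2 t| ≤ B) := by
  obtain ⟨hs10, hx10, hs20, hx20⟩ := hinit
  -- continuity on [0,∞)
  have hs1c : ContinuousOn s1 (Ici 0) := fun u hu =>
    ((hode1 u hu).continuousAt).continuousWithinAt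
  have hs2c : ContinuousOn s2 (Ici 0) := fun u hu =>
    ((hode3 u hu).continuousAt).continuousWithinAt
  have ha1 : ContinuousOn (fun t => f1 (s1 t) (s2 t) - D) (Ici 0) :=
    (hf1C1.continuous.comp_continuousOn (hs1c.prodMk hs2c)).sub continuousOn_const
  have ha2 : ContinuousOn (fun t => f2 (s1 t) (s2 t) - D) (Ici 0) :=
    (hf2C1.continuous.comp_continuousOn (hs1c.prodMk hs2c)).sub continuousOn_const
  -- conservation laws
  have hz1 : ∀ t : ℝ, 0 ≤ t →
      s1 t + x1 t = s1in + (s1 0 + x1 0 - s1in) * Real.exp (-D * t) := by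
    have := exp_decay_sol D s1in (fun t => s1 t + x1 t) (by
      intro t ht
      have h := (hode1 t ht).add (hode2 t ht)
      exact h.congr_deriv (by ring))
    simpa using this
  have hz2 : ∀ t : ℝ, 0 ≤ t →
      s2 t + x2 t - x1 t = s2in + (s2 0 + x2 0 - x1 0 - s2in) * Real.exp (-D * t) := by
    have := exp_decay_sol D s2in (fun t => s2 t + x2 t - x1 t) (by
      intro t ht
      have h := ((hode3 t ht).add (hode4 t ht)).sub (hode2 t ht)
      exact h.congr_deriv (by ring))
    simpa using this
  -- nonnegativity
  have hx1nn : ∀ t : ℝ, 0 ≤ t → 0 ≤ x1 t := by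
    apply nonneg_of_linear (fun t => f1 (s1 t) (s2 t) - D) x1 (fun t ht => hode2 t ht)
      ha1 hx10
  have hx2nn : ∀ t : ℝ, 0 ≤ t → 0 ≤ x2 t := by
    apply nonneg_of_linear (fun t => f2 (s1 t) (s2 t) - D) x2 (fun t ht => hode4 t ht)
      ha2 hx20
  have hs1nn : ∀ t : ℝ, 0 ≤ t → 0 ≤ s1 t := by
    apply nonneg_of_crossing s1
      (fun t => D * (s1in - s1 t) - f1 (s1 t) (s2 t) * x1 t) hode1 hs10
    intro T hT hwT
    rw [hwT, hf10]
    simpa using mul_pos hD hs1in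
  have hs2nn : ∀ t : ℝ, 0 ≤ t → 0 ≤ s2 t := by
    apply nonneg_of_crossing s2
      (fun t => D * (s2in - s2 t) - f2 (s1 t) (s2 t) * x2 t
        + f1 (s1 t) (s2 t) * x1 t) hode3 hs20
    intro T hT hwT
    rw [hwT, hf20]
    have h1 : 0 ≤ f1 (s1 T) 0 * x1 T :=
      mul_nonneg (hf1nonneg _ _) (hx1nn T hT)
    have h2 : 0 < D * s2in := mul_pos hD hs2in
    simp only [sub_zero, zero_mul]
    linarith
  -- exponential bounds
  set c1 : ℝ := s1 0 + x1 0 - s1in with hc1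
  set c2 : ℝ := s2 0 + x2 0 - x1 0 - s2in with hc2'
  set M1 : ℝ := s1in + |c1| with hM1
  set M2 : ℝ := s2in + |c2| + M1 with hM2
  have hM1pos : 0 < M1 := by positivity
  have hexp : ∀ t : ℝ, 0 ≤ t → Real.exp (-D * t) ≤ 1 ∧ 0 < Real.exp (-D * t) := by
    intro t ht
    constructor
    · have : -D * t ≤ 0 := by nlinarith
      calc Real.exp (-D * t) ≤ Real.exp 0 := Real.exp_le_exp.mpr this
        _ = 1 := Real.exp_zero
    · exact Real.exp_pos _
  have hsum1 : ∀ t : ℝ, 0 ≤ t → s1 t + x1 t ≤ M1 := by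
    intro t ht
    obtain ⟨he1, he2⟩ := hexp t ht
    have h := hz1 t ht
    have hb : c1 * Real.exp (-D * t) ≤ |c1| := by
      calc c1 * Real.exp (-D * t) ≤ |c1| * Real.exp (-D * t) :=
            mul_le_mul_of_nonneg_right (le_abs_self c1) he2.le
        _ ≤ |c1| * 1 := mul_le_mul_of_nonneg_left he1 (abs_nonneg _)
        _ = |c1| := mul_one _
    rw [h]
    exact add_le_add_right hb s1in
  have hsum2 : ∀ t : ℝ, 0 ≤ t → s2 t + x2 t ≤ M2 := by
    intro t ht
    obtain ⟨he1, he2⟩ := hexp t ht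
    have h := hz2 t ht
    have hb : c2 * Real.exp (-D * t) ≤ |c2| := by
      calc c2 * Real.exp (-D * t) ≤ |c2| * Real.exp (-D * t) :=
            mul_le_mul_of_nonneg_right (le_abs_self c2) he2.le
        _ ≤ |c2| * 1 := mul_le_mul_of_nonneg_left he1 (abs_nonneg _)
        _ = |c2| := mul_one _
    have hx1b : x1 t ≤ M1 := by
      have := hsum1 t ht
      have := hs1nn t ht
      linarith
    have : s2 t + x2 t - x1 t ≤ s2in + |c2| := by rw [h]; linarith
    linarith
  refine ⟨hz2, ?_, ?_⟩
  · -- limit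
    have h1 : Tendsto (fun t : ℝ => D * t) atTop atTop :=
      tendsto_id.const_mul_atTop hD
    have h2 : Tendsto (fun t : ℝ => -D * t) atTop atBot := by
      have := tendsto_neg_atTop_atBot.comp h1
      simpa [Function.comp_def, neg_mul] using this
    have h3 : Tendsto (fun t : ℝ => Real.exp (-D * t)) atTop (nhds 0) :=
      Real.tendsto_exp_atBot.comp h2
    have h4 : Tendsto (fun t : ℝ => s2in + c2 * Real.exp (-D * t)) atTop (nhds s2in) := by
      have := (h3.const_mul c2).const_add s2in
      simpa using this
    refine Tendsto.congr' ?_ h4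
    filter_upwards [eventually_ge_atTop (0 : ℝ)] with t ht
    exact (hz2 t ht).symm
  · refine ⟨M1 + M2, ?_⟩
    intro t ht
    have hM2pos : 0 < M2 := by positivity
    have h1 := hsum1 t ht
    have h2 := hsum2 t ht
    have hs1 := hs1nn t ht
    have hx1 := hx1nn t ht
    have hs2 := hs2nn t ht
    have hx2 := hx2nn t ht
    refine ⟨?_, ?_, ?_, ?_⟩
    · rw [abs_of_nonneg hs1]; linarith
    · rw [abs_of_nonneg hx1]; linarith
    · rw [abs_of_nonneg hs2]; linarith
    · rw [abs_of_nonneg hx2]; linarith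
end

section
/- The set Ω = {(s1,x1,s2,x2) ∈ ℝ₊⁴ : s1 + x1 = s1in and s2 + x2 = x1 + s2in} is positively invariant for the chemostat system. -/
open Set

/-- A function constant-zero trick: if z' = -D z on [0,∞) and z 0 = 0, then z ≡ 0 on [0,∞). -/
lemma conserv_zero (D : ℝ) (z : ℝ → ℝ)
    (hz : ∀ t : ℝ, 0 ≤ t → HasDerivAt z (-(D * z t)) t)
    (h0 : z 0 = 0) : ∀ t : ℝ, 0 ≤ t → z t = 0 := by
  intro T hT
  set g : ℝ → ℝ := fun t => z t * Real.exp (D * t) with hg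
  have hg' : ∀ t : ℝ, 0 ≤ t → HasDerivAt g 0 t := by
    intro t ht
    have he : HasDerivAt (fun t => Real.exp (D * t)) (Real.exp (D * t) * D) t := by
      have := (Real.hasDerivAt_exp (D * t)).comp t ((hasDerivAt_id t).const_mul D)
      simpa [mul_comm, Function.comp_def] using this
    have := (hz t ht).mul he
    refine this.congr_deriv ?_
    ring
  have hcont : ContinuousOn g (Icc 0 T) := fun t ht =>
    ((hg' t ht.1).continuousAt).continuousWithinAt
  have hconst := constant_of_has_deriv_right_zero hcont
    (fun t ht => ((hg' t ht.1).hasDerivWithinAt)) T (by constructor <;> [exact hT; rfl])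
  have : z T * Real.exp (D * T) = 0 := by simpa [hg, h0] using hconst
  have hexp : Real.exp (D * T) ≠ 0 := (Real.exp_pos _).ne'
  exact (mul_eq_zero.mp this).resolve_right hexp

/-- Integrating factor: if x' = a·x on [0,∞) with a continuous on [0,∞) and x 0 ≥ 0,
then x ≥ 0 on [0,∞). -/
lemma linear_nonneg (a x : ℝ → ℝ)
    (ha : ContinuousOn a (Ici 0))
    (hx : ∀ t : ℝ, 0 ≤ t → HasDerivAt x (a t * x t) t)
    (h0 : 0 ≤ x 0) : ∀ t : ℝ, 0 ≤ t → 0 ≤ x t := by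
  set b : ℝ → ℝ := fun t => a (max t 0) with hb
  have hbc : Continuous b := by
    rw [← continuousOn_univ]
    exact ha.comp (continuous_id.max continuous_const).continuousOn
      (fun t _ => mem_Ici.mpr (le_max_right _ _))
  set A : ℝ → ℝ := fun t => ∫ u in (0:ℝ)..t, b u with hA
  have hA' : ∀ t : ℝ, HasDerivAt A (b t) t := fun t =>
    intervalIntegral.integral_hasDerivAt_right (hbc.intervalIntegrable _ _)
      (hbc.stronglyMeasurableAtFilter _ _) hbc.continuousAt
  intro T hT
  set g : ℝ → ℝ := fun t => x t * Real.exp (-A t) with hg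
  have hg' : ∀ t : ℝ, 0 ≤ t → HasDerivAt g 0 t := by
    intro t ht
    have he : HasDerivAt (fun t => Real.exp (-A t)) (Real.exp (-A t) * (-(b t))) t := by
      have := (Real.hasDerivAt_exp (-A t)).comp t ((hA' t).neg)
      simpa [mul_comm, Function.comp_def] using this
    have := (hx t ht).mul he
    have hbt : b t = a t := by simp [hb, max_eq_left ht]
    rw [hbt] at this
    refine this.congr_deriv ?_
    ring
  have hcont : ContinuousOn g (Icc 0 T) := fun t ht =>
    ((hg' t ht.1).continuousAt).continuousWithinAt
  have hconst := constant_of_has_deriv_right_zero hcont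
    (fun t ht => ((hg' t ht.1).hasDerivWithinAt)) T (by constructor <;> [exact hT; rfl])
  have hA0 : A 0 = 0 := by simp [hA]
  have : x T * Real.exp (-A T) = x 0 := by simpa [hg, hA0] using hconst
  nlinarith [Real.exp_pos (-A T), this]

/-- Barrier/first-crossing: if f' > 0 whenever f hits 0 (t ≥ 0), and f 0 ≥ 0,
then f ≥ 0 on [0,∞). -/
lemma nonneg_barrier (f d : ℝ → ℝ)
    (hd : ∀ t : ℝ, 0 ≤ t → HasDerivAt f (d t) t)
    (h0 : 0 ≤ f 0)
    (hpos : ∀ t : ℝ, 0 ≤ t → f t = 0 → 0 < d t) :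
    ∀ t : ℝ, 0 ≤ t → 0 ≤ f t := by
  intro T hT
  by_contra hneg
  push_neg at hneg
  have hcont : ContinuousOn f (Icc 0 T) := fun t ht =>
    ((hd t ht.1).continuousAt).continuousWithinAt
  set K : Set ℝ := Icc 0 T ∩ f ⁻¹' (Ici 0) with hK
  have hKcl : IsClosed K := hcont.preimage_isClosed_of_isClosed isClosed_Icc isClosed_Ici
  have hKne : K.Nonempty := ⟨0, ⟨le_refl 0, hT⟩, h0⟩
  have hKbd : BddAbove K := ⟨T, fun t ht => ht.1.2⟩
  set t0 : ℝ := sSup K with ht0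
  have ht0K : t0 ∈ K := hKcl.csSup_mem hKne hKbd
  have ht0le : t0 ≤ T := ht0K.1.2
  have ht0ge : (0:ℝ) ≤ t0 := ht0K.1.1
  have hf0le : 0 ≤ f t0 := ht0K.2
  -- any t in (t0, T] has f t < 0
  have hafter : ∀ t, t0 < t → t ≤ T → f t < 0 := by
    intro t h1 h2
    by_contra hge
    push_neg at hge
    have : t ∈ K := ⟨⟨le_trans ht0ge h1.le, h2⟩, hge⟩
    exact absurd (le_csSup hKbd this) (not_le.mpr h1)
  have ht0lt : t0 < T := lt_of_le_of_ne ht0le (by intro h; rw [h] at hf0le; exact absurd hf0le (not_le.mpr hneg))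
  -- f t0 = 0 by right continuity
  have hf00 : f t0 = 0 := by
    have htend : Filter.Tendsto f (nhdsWithin t0 (Ioi t0)) (nhds (f t0)) :=
      ((hd t0 ht0ge).continuousAt.tendsto).mono_left nhdsWithin_le_nhds
    have hev : ∀ᶠ t in nhdsWithin t0 (Ioi t0), f t ≤ 0 := by
      filter_upwards [Ioo_mem_nhdsGT_of_mem (left_mem_Ico.mpr ht0lt)] with t ht
      exact (hafter t ht.1 ht.2.le).le
    have := le_of_tendsto htend hev
    linarith
  have hdpos := hpos t0 ht0ge hf00
  -- derivative positive means f > 0 just after t0: contradiction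
  have hslope := hasDerivAt_iff_tendsto_slope.mp (hd t0 ht0ge)
  have hsub : Ioi t0 ⊆ {t0}ᶜ := fun t (ht : t0 < t) => ne_of_gt ht
  have hslope' : Filter.Tendsto (slope f t0) (nhdsWithin t0 (Ioi t0)) (nhds (d t0)) :=
    hslope.mono_left (nhdsWithin_mono t0 hsub)
  have hev : ∀ᶠ t in nhdsWithin t0 (Ioi t0), 0 < slope f t0 t :=
    hslope'.eventually (eventually_gt_nhds hdpos)
  have hne : (nhdsWithin t0 (Ioi t0)).NeBot := nhdsGT_neBot t0
  have hev3 : ∀ᶠ t in nhdsWithin t0 (Ioi t0), False := by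
    filter_upwards [Ioo_mem_nhdsGT_of_mem (left_mem_Ico.mpr ht0lt), hev,
      self_mem_nhdsWithin] with t ht h1 (hmem : t0 < t)
    have hflt : f t < 0 := hafter t ht.1 ht.2.le
    rw [slope_def_field, hf00] at h1
    have hpos' : 0 < (f t - 0) / (t - t0) := h1
    have := div_pos_iff.mp hpos'
    rcases this with ⟨ha, _⟩ | ⟨_, hb⟩
    · linarith
    · linarith
  exact hev3.exists.choose_spec

/-- The set Ω = {(s1,x1,s2,x2) ∈ ℝ₊⁴ : s1 + x1 = s1in, s2 + x2 = x1 + s2in}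
is positively invariant for the chemostat system. -/
theorem stmt_3
    (D s1in s2in : ℝ) (hD : 0 < D) (hs1in : 0 < s1in) (hs2in : 0 < s2in)
    (f1 f2 : ℝ → ℝ → ℝ)
    (hf1C1 : ContDiff ℝ 1 (fun p : ℝ × ℝ => f1 p.1 p.2))
    (hf2C1 : ContDiff ℝ 1 (fun p : ℝ × ℝ => f2 p.1 p.2))
    (hf1nonneg : ∀ u v : ℝ, 0 ≤ f1 u v)
    (hf2nonneg : ∀ u v : ℝ, 0 ≤ f2 u v)
    (hf10 : ∀ v : ℝ, f1 0 v = 0)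
    (hf20 : ∀ u : ℝ, f2 u 0 = 0)
    (s1 x1 s2 x2 : ℝ → ℝ)
    (hode1 : ∀ t : ℝ, 0 ≤ t →
      HasDerivAt s1 (D * (s1in - s1 t) - f1 (s1 t) (s2 t) * x1 t) t)
    (hode2 : ∀ t : ℝ, 0 ≤ t →
      HasDerivAt x1 ((f1 (s1 t) (s2 t) - D) * x1 t) t)
    (hode3 : ∀ t : ℝ, 0 ≤ t →
      HasDerivAt s2 (D * (s2in - s2 t) - f2 (s1 t) (s2 t) * x2 t
        + f1 (s1 t) (s2 t) * x1 t) t)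
    (hode4 : ∀ t : ℝ, 0 ≤ t →
      HasDerivAt x2 ((f2 (s1 t) (s2 t) - D) * x2 t) t)
    (hinit : 0 ≤ s1 0 ∧ 0 ≤ x1 0 ∧ 0 ≤ s2 0 ∧ 0 ≤ x2 0)
    (hΩ1 : s1 0 + x1 0 = s1in)
    (hΩ2 : s2 0 + x2 0 = x1 0 + s2in) :
    ∀ t : ℝ, 0 ≤ t →
      (0 ≤ s1 t ∧ 0 ≤ x1 t ∧ 0 ≤ s2 t ∧ 0 ≤ x2 t) ∧
      s1 t + x1 t = s1in ∧ s2 t + x2 t = x1 t + s2in := by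
  -- continuity of s1, s2 on [0,∞)
  have hs1c : ContinuousOn s1 (Ici 0) := fun t ht =>
    (hode1 t ht).continuousAt.continuousWithinAt
  have hs2c : ContinuousOn s2 (Ici 0) := fun t ht =>
    (hode3 t ht).continuousAt.continuousWithinAt
  -- nonnegativity of x1
  have ha1 : ContinuousOn (fun t => f1 (s1 t) (s2 t) - D) (Ici 0) :=
    (hf1C1.continuous.comp_continuousOn (hs1c.prodMk hs2c)).sub continuousOn_const
  have ha2 : ContinuousOn (fun t => f2 (s1 t) (s2 t) - D) (Ici 0) :=
    (hf2C1.continuous.comp_continuousOn (hs1c.prodMk hs2c)).sub continuousOn_const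
  have hx1 : ∀ t : ℝ, 0 ≤ t → 0 ≤ x1 t :=
    linear_nonneg _ x1 ha1 (fun t ht => hode2 t ht) hinit.2.1
  have hx2 : ∀ t : ℝ, 0 ≤ t → 0 ≤ x2 t :=
    linear_nonneg _ x2 ha2 (fun t ht => hode4 t ht) hinit.2.2.2
  -- nonnegativity of s1
  have hs1 : ∀ t : ℝ, 0 ≤ t → 0 ≤ s1 t := by
    refine nonneg_barrier s1 (fun t => D * (s1in - s1 t) - f1 (s1 t) (s2 t) * x1 t)
      hode1 hinit.1 ?_
    intro t _ h0
    simp only [h0, hf10]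
    nlinarith [mul_pos hD hs1in]
  -- nonnegativity of s2
  have hs2 : ∀ t : ℝ, 0 ≤ t → 0 ≤ s2 t := by
    refine nonneg_barrier s2
      (fun t => D * (s2in - s2 t) - f2 (s1 t) (s2 t) * x2 t + f1 (s1 t) (s2 t) * x1 t)
      hode3 hinit.2.2.1 ?_
    intro t ht h0
    simp only [h0, hf20]
    have h1 : 0 ≤ f1 (s1 t) 0 * x1 t := mul_nonneg (hf1nonneg _ _) (hx1 t ht)
    nlinarith [mul_pos hD hs2in]
  -- conservation law 1
  have hz1 : ∀ t : ℝ, 0 ≤ t →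
      HasDerivAt (fun t => s1 t + x1 t - s1in) (-(D * (s1 t + x1 t - s1in))) t := by
    intro t ht
    have := ((hode1 t ht).add (hode2 t ht)).sub_const s1in
    refine this.congr_deriv ?_
    ring
  have hc1 : ∀ t : ℝ, 0 ≤ t → s1 t + x1 t - s1in = 0 :=
    conserv_zero D _ hz1 (by show s1 0 + x1 0 - s1in = 0; linarith)
  -- conservation law 2
  have hz2 : ∀ t : ℝ, 0 ≤ t →
      HasDerivAt (fun t => s2 t + x2 t - x1 t - s2in)
        (-(D * (s2 t + x2 t - x1 t - s2in))) t := by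
    intro t ht
    have := (((hode3 t ht).add (hode4 t ht)).sub (hode2 t ht)).sub_const s2in
    refine this.congr_deriv ?_
    ring
  have hc2 : ∀ t : ℝ, 0 ≤ t → s2 t + x2 t - x1 t - s2in = 0 :=
    conserv_zero D _ hz2 (by show s2 0 + x2 0 - x1 0 - s2in = 0; linarith)
  intro t ht
  refine ⟨⟨hs1 t ht, hx1 t ht, hs2 t ht, hx2 t ht⟩, ?_, ?_⟩
  · linarith [hc1 t ht]
  · linarith [hc2 t ht]
end

section
/- For the transformed system ξ1' = h1(ξ1,ξ2) := f1(s1in - e^{ξ1}, s2in + e^{ξ1} - e^{ξ2}) - D, ξ2' = h2(ξ1,ξ2) := f2(s1in - e^{ξ1}, s2in + e^{ξ1} - e^{ξ2}) - D, the divergence satisfies ∂h1/∂ξ1 + ∂h2/∂ξ2 = e^{ξ1}(-∂f1/∂s1 + ∂f1/∂s2) - e^{ξ2} ∂f2/∂s2 < 0 at every point where s1in - e^{ξ1} > 0 and s2in + e^{ξ1} - e^{ξ2} > 0. -/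
open Real

/-- For h1(ξ1,ξ2) = f1(s1in - e^{ξ1}, s2in + e^{ξ1} - e^{ξ2}) - D and
h2(ξ1,ξ2) = f2(s1in - e^{ξ1}, s2in + e^{ξ1} - e^{ξ2}) - D, the divergence
∂h1/∂ξ1 + ∂h2/∂ξ2 = e^{ξ1}(-∂f1/∂s1 + ∂f1/∂s2) - e^{ξ2} ∂f2/∂s2 < 0
wherever s1in - e^{ξ1} > 0 and s2in + e^{ξ1} - e^{ξ2} > 0. -/
theorem stmt_14
    (D s1in s2in : ℝ) (hD : 0 < D) (hs1in : 0 < s1in) (hs2in : 0 < s2in)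
    (f1 f2 : ℝ → ℝ → ℝ)
    (hf1C1 : ContDiff ℝ 1 (fun p : ℝ × ℝ => f1 p.1 p.2))
    (hf2C1 : ContDiff ℝ 1 (fun p : ℝ × ℝ => f2 p.1 p.2))
    (hf1s1 : ∀ p : ℝ × ℝ, 0 < p.1 → 0 < p.2 →
      0 < fderiv ℝ (fun q : ℝ × ℝ => f1 q.1 q.2) p (1, 0))
    (hf1s2 : ∀ p : ℝ × ℝ, 0 < p.1 → 0 < p.2 →
      fderiv ℝ (fun q : ℝ × ℝ => f1 q.1 q.2) p (0, 1) < 0)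
    (hf2s1 : ∀ p : ℝ × ℝ, 0 < p.1 → 0 < p.2 →
      fderiv ℝ (fun q : ℝ × ℝ => f2 q.1 q.2) p (1, 0) < 0)
    (hf2s2 : ∀ p : ℝ × ℝ, 0 < p.1 → 0 < p.2 →
      0 < fderiv ℝ (fun q : ℝ × ℝ => f2 q.1 q.2) p (0, 1))
    (h1 h2 : ℝ → ℝ → ℝ)
    (hh1 : h1 = fun ξ1 ξ2 =>
      f1 (s1in - Real.exp ξ1) (s2in + Real.exp ξ1 - Real.exp ξ2) - D)
    (hh2 : h2 = fun ξ1 ξ2 =>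
      f2 (s1in - Real.exp ξ1) (s2in + Real.exp ξ1 - Real.exp ξ2) - D) :
    ∀ ξ1 ξ2 : ℝ, 0 < s1in - Real.exp ξ1 → 0 < s2in + Real.exp ξ1 - Real.exp ξ2 →
      deriv (fun u => h1 u ξ2) ξ1 + deriv (fun v => h2 ξ1 v) ξ2 =
        Real.exp ξ1 *
          (-(fderiv ℝ (fun q : ℝ × ℝ => f1 q.1 q.2)
              (s1in - Real.exp ξ1, s2in + Real.exp ξ1 - Real.exp ξ2) (1, 0)) +
            fderiv ℝ (fun q : ℝ × ℝ => f1 q.1 q.2)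
              (s1in - Real.exp ξ1, s2in + Real.exp ξ1 - Real.exp ξ2) (0, 1)) -
        Real.exp ξ2 *
          (fderiv ℝ (fun q : ℝ × ℝ => f2 q.1 q.2)
              (s1in - Real.exp ξ1, s2in + Real.exp ξ1 - Real.exp ξ2) (0, 1)) ∧
      deriv (fun u => h1 u ξ2) ξ1 + deriv (fun v => h2 ξ1 v) ξ2 < 0 := by

  intro ξ1 ξ2 hp1 hp2
  subst hh1 hh2
  set p : ℝ × ℝ := (s1in - Real.exp ξ1, s2in + Real.exp ξ1 - Real.exp ξ2) with hp
  set L1 := fderiv ℝ (fun q : ℝ × ℝ => f1 q.1 q.2) p with hL1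
  set L2 := fderiv ℝ (fun q : ℝ × ℝ => f2 q.1 q.2) p with hL2
  have hF1 : HasFDerivAt (fun q : ℝ × ℝ => f1 q.1 q.2) L1 p :=
    (hf1C1.differentiable one_ne_zero p).hasFDerivAt
  have hF2 : HasFDerivAt (fun q : ℝ × ℝ => f2 q.1 q.2) L2 p :=
    (hf2C1.differentiable one_ne_zero p).hasFDerivAt
  -- curve in ξ1
  have hg1 : HasDerivAt (fun u : ℝ => ((s1in - Real.exp u, s2in + Real.exp u - Real.exp ξ2) : ℝ × ℝ))
      (-Real.exp ξ1, Real.exp ξ1) ξ1 := by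
    apply HasDerivAt.prodMk
    · simpa using ((Real.hasDerivAt_exp ξ1).const_sub s1in)
    · simpa using (((Real.hasDerivAt_exp ξ1).const_add s2in).sub_const (Real.exp ξ2))
  have hg2 : HasDerivAt (fun v : ℝ => ((s1in - Real.exp ξ1, s2in + Real.exp ξ1 - Real.exp v) : ℝ × ℝ))
      (0, -Real.exp ξ2) ξ2 := by
    apply HasDerivAt.prodMk
    · simpa using (hasDerivAt_const ξ2 (s1in - Real.exp ξ1))
    · simpa using ((Real.hasDerivAt_exp ξ2).const_sub (s2in + Real.exp ξ1))
  have hd1 : HasDerivAt (fun u => f1 (s1in - Real.exp u) (s2in + Real.exp u - Real.exp ξ2) - D)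
      (L1 (-Real.exp ξ1, Real.exp ξ1)) ξ1 := by
    have := (hF1.comp_hasDerivAt ξ1 hg1)
    simpa using this.sub_const D
  have hd2 : HasDerivAt (fun v => f2 (s1in - Real.exp ξ1) (s2in + Real.exp ξ1 - Real.exp v) - D)
      (L2 (0, -Real.exp ξ2)) ξ2 := by
    have := (hF2.comp_hasDerivAt ξ2 hg2)
    simpa using this.sub_const D
  have e1 : L1 (-Real.exp ξ1, Real.exp ξ1)
      = Real.exp ξ1 * (-(L1 (1, 0)) + L1 (0, 1)) := by
    have : ((-Real.exp ξ1, Real.exp ξ1) : ℝ × ℝ)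
        = (-Real.exp ξ1) • ((1 : ℝ), (0 : ℝ)) + (Real.exp ξ1) • ((0 : ℝ), (1 : ℝ)) := by
      simp [Prod.ext_iff]
    rw [this, map_add, map_smul, map_smul]
    simp only [smul_eq_mul]
    ring
  have e2 : L2 (0, -Real.exp ξ2) = -(Real.exp ξ2 * L2 (0, 1)) := by
    have : ((0, -Real.exp ξ2) : ℝ × ℝ) = (-Real.exp ξ2) • ((0 : ℝ), (1 : ℝ)) := by
      simp [Prod.ext_iff]
    rw [this, map_smul]
    simp only [smul_eq_mul]
    ring
  have key : deriv (fun u => f1 (s1in - Real.exp u) (s2in + Real.exp u - Real.exp ξ2) - D) ξ1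
      + deriv (fun v => f2 (s1in - Real.exp ξ1) (s2in + Real.exp ξ1 - Real.exp v) - D) ξ2
      = Real.exp ξ1 * (-(L1 (1, 0)) + L1 (0, 1)) - Real.exp ξ2 * L2 (0, 1) := by
    rw [hd1.deriv, hd2.deriv, e1, e2]; ring
  refine ⟨key, ?_⟩
  rw [key]
  have h1pos := hf1s1 p hp1 hp2
  have h1neg := hf1s2 p hp1 hp2
  have h2pos := hf2s2 p hp1 hp2
  rw [← hL1] at h1pos h1neg
  rw [← hL2] at h2pos
  have := Real.exp_pos ξ1
  have := Real.exp_pos ξ2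
  nlinarith
end
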